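/- arXiv:2507.18475 — 2 statements merged into one kernel-verified Lean document; each statement's English description precedes it below -/
import Mathlib

section
/- Let Γ be a finite group acting on a set X, and let M be the free abelian group on X (the group of finitely supported functions X → ℤ) with the permutation action of Γ induced by the action on X. Then the first group cohomology H¹(Γ, M) is trivial. -/
/- The permutation action of `Γ` on the free abelian group `X →₀ ℤ` on a `Γ`-set `X`,
given by `γ • f = Finsupp.mapDomain (γ • ·) f`. -/
attribute [local instance] Finsupp.comapSMul Finsupp.comapMulAction
  Finsupp.comapDistribMulAction

variable (Γ M : Type*) [Group Γ] [AddCommGroup M] [DistribMulAction Γ M]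

/-- The group of 1-cocycles `c : Γ → M`, i.e. maps with `c(γδ) = c(γ) + γ·c(δ)`. -/
def oneCocycles : AddSubgroup (Γ → M) where
  carrier := {c | ∀ γ δ : Γ, c (γ * δ) = c γ + γ • c δ}
  zero_mem' := by intro γ δ; simp
  add_mem' := by
    intro a b ha hb γ δ
    simp only [Pi.add_apply, ha γ δ, hb γ δ, smul_add]
    abel
  neg_mem' := by
    intro a ha γ δ
    simp only [Pi.neg_apply, ha γ δ, smul_neg]
    abel

/-- The group of 1-coboundaries `γ ↦ γ·m − m` for `m ∈ M`. -/
def oneCoboundaries : AddSubgroup (Γ → M) where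
  carrier := {c | ∃ m : M, ∀ γ : Γ, c γ = γ • m - m}
  zero_mem' := ⟨0, by simp⟩
  add_mem' := by
    rintro a b ⟨m, hm⟩ ⟨m', hm'⟩
    refine ⟨m + m', fun γ => ?_⟩
    simp only [Pi.add_apply, hm γ, hm' γ, smul_add]
    abel
  neg_mem' := by
    rintro a ⟨m, hm⟩
    refine ⟨-m, fun γ => ?_⟩
    simp only [Pi.neg_apply, hm γ, smul_neg]
    abel

/-- The first group cohomology `H¹(Γ, M)`: 1-cocycles modulo 1-coboundaries. -/
abbrev H1 := oneCocycles Γ M ⧸ (oneCoboundaries Γ M).addSubgroupOf (oneCocycles Γ M)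

section Aux

variable {Γ X : Type*} [Group Γ] [MulAction Γ X]

lemma perm_smul_apply (γ : Γ) (f : X →₀ ℤ) (x : X) :
    (γ • f) x = f (γ⁻¹ • x) := by
  rw [Finsupp.comapSMul_def]
  conv_lhs => rw [show x = γ • (γ⁻¹ • x) by simp]
  rw [Finsupp.mapDomain_apply (MulAction.injective γ)]

variable {c : Γ → (X →₀ ℤ)} (hc : ∀ γ δ : Γ, c (γ * δ) = c γ + γ • c δ)

include hc

lemma cocycle_one : c 1 = 0 := by
  have := hc 1 1
  simp only [mul_one, one_smul] at this
  have h2 : c 1 + c 1 = c 1 + 0 := by rw [add_zero]; linear_combination (norm := abel) -this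
  exact (add_left_cancel h2)

lemma cocycle_pow_eval (h : Γ) (x0 : X) (hx0 : h • x0 = x0) :
    ∀ n : ℕ, c (h ^ n) x0 = n * c h x0 := by
  have hinv : h⁻¹ • x0 = x0 := by rw [inv_smul_eq_iff, hx0]
  intro n
  induction n with
  | zero => simp [pow_zero, cocycle_one hc]
  | succ n ih =>
      rw [pow_succ', hc h (h ^ n)]
      push_cast
      simp [Finsupp.add_apply, perm_smul_apply, hinv, ih]
      ring

/-- A cocycle evaluated at a fixed point of `γ` vanishes, when `Γ` is finite. -/
lemma cocycle_stab_eval [Finite Γ] (h : Γ) (x0 : X) (hx0 : h • x0 = x0) :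
    c h x0 = 0 := by
  have hn : h ^ orderOf h = 1 := pow_orderOf_eq_one h
  have h1 := cocycle_pow_eval hc h x0 hx0 (orderOf h)
  rw [hn, cocycle_one hc] at h1
  have hpos : 0 < orderOf h := orderOf_pos h
  have := h1.symm
  simp only [Finsupp.coe_zero, Pi.zero_apply] at this
  have : (orderOf h : ℤ) * c h x0 = 0 := this
  rcases mul_eq_zero.1 this with h' | h'
  · exact absurd h' (by exact_mod_cast hpos.ne')
  · exact h'

end Aux

/-- If a finite group `Γ` acts on a set `X`, then the first cohomology of `Γ` with values
in the permutation module `X →₀ ℤ` (the free abelian group on `X`, with the action induced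
by the `Γ`-action on `X`) is trivial. -/
theorem h1_permutation_module_trivial
    (Γ X : Type*) [Group Γ] [Finite Γ] [MulAction Γ X]
    (x : H1 Γ (X →₀ ℤ)) : x = 0 := by
  classical
  have := Fintype.ofFinite Γ
  induction x using QuotientAddGroup.induction_on with
  | H c =>
    rw [QuotientAddGroup.eq_zero_iff, AddSubgroup.mem_addSubgroupOf]
    obtain ⟨c, hc⟩ := c
    have hc : ∀ γ δ : Γ, c (γ * δ) = c γ + γ • c δ := hc
    -- base point of the orbit of `x`
    set Q := MulAction.orbitRel Γ X with hQ
    let bp : X → X := fun x => (Quotient.mk Q x).out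
    have hbp : ∀ x : X, ∃ g : Γ, g • x = bp x := by
      intro x
      have : bp x ∈ MulAction.orbit Γ x := Quotient.mk_out (s := Q) x
      exact this
    have hbp_smul : ∀ (γ : Γ) (x : X), bp (γ • x) = bp x := by
      intro γ x
      have : Quotient.mk Q (γ • x) = Quotient.mk Q x :=
        Quotient.sound (⟨γ, rfl⟩ : (γ • x) ∈ MulAction.orbit Γ x)
      simp only [bp, this]
    let gsel : X → Γ := fun x => (hbp x).choose
    have hgsel : ∀ x : X, gsel x • x = bp x := fun x => (hbp x).choose_spec
    let m' : X → ℤ := fun x => c (gsel x) (bp x)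
    -- independence of the choice of `g`
    have key : ∀ (x : X) (g : Γ), g • x = bp x → c g (bp x) = m' x := by
      intro x g hg
      set g0 := gsel x with hg0
      have hg0x : g0 • x = bp x := hgsel x
      set h := g * g0⁻¹ with hh
      have hhx : h • bp x = bp x := by
        rw [hh, mul_smul, ← hg0x, inv_smul_smul, hg, hg0x]
      have hdec : c g = c h + h • c g0 := by
        rw [← hc h g0, hh, inv_mul_cancel_right]
      have hinv : h⁻¹ • bp x = bp x := by rw [inv_smul_eq_iff, hhx]
      rw [hdec]
      simp only [Finsupp.add_apply, perm_smul_apply, hinv,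
        cocycle_stab_eval hc h (bp x) hhx, zero_add]
      rfl
    -- the main relation
    have main : ∀ (γ : Γ) (x : X), c γ x = m' (γ⁻¹ • x) - m' x := by
      intro γ x
      have hbpx : bp (γ⁻¹ • x) = bp x := hbp_smul γ⁻¹ x
      have hmap : (gsel x * γ) • (γ⁻¹ • x) = bp (γ⁻¹ • x) := by
        rw [hbpx, mul_smul, smul_inv_smul]
        exact hgsel x
      have h1 : c (gsel x * γ) (bp (γ⁻¹ • x)) = m' (γ⁻¹ • x) :=
        key (γ⁻¹ • x) (gsel x * γ) hmap
      have h2 : c (gsel x * γ) = c (gsel x) + gsel x • c γ := hc (gsel x) γ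
      have hx : (gsel x)⁻¹ • bp x = x := by rw [inv_smul_eq_iff, hgsel x]
      rw [h2] at h1
      simp only [Finsupp.add_apply, perm_smul_apply, hbpx, hx] at h1
      have : m' x + c γ x = m' (γ⁻¹ • x) := by rw [← h1]
      linarith
    -- finite support of m'
    let S : Finset X := Finset.univ.biUnion (fun γ : Γ => (c γ).support)
    let T : Finset X := Finset.univ.biUnion (fun g : Γ => S.image (g • ·))
    have hsupp : ∀ x : X, m' x ≠ 0 → x ∈ T := by
      intro x hx
      have h1 : bp x ∈ S := by
        simp only [S, Finset.mem_biUnion, Finset.mem_univ, true_and]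
        exact ⟨gsel x, Finsupp.mem_support_iff.2 hx⟩
      simp only [T, Finset.mem_biUnion, Finset.mem_univ, true_and, Finset.mem_image]
      exact ⟨(gsel x)⁻¹, bp x, h1, by rw [inv_smul_eq_iff, hgsel x]⟩
    let m : X →₀ ℤ := Finsupp.onFinset T m' hsupp
    have hm : ∀ x : X, m x = m' x := fun x => rfl
    refine ⟨m, fun γ => ?_⟩
    ext x
    simp only [Finsupp.sub_apply, perm_smul_apply, hm]
    exact main γ x
end

section
/- Every unit of the ℝ-algebra ℝ[x,y]/(x² + y² − 1) is the image of a nonzero real constant; that is, the group of units of ℝ[x,y]/(x² + y² − 1) equals the image of ℝˣ under the structure map. -/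
open MvPolynomial Polynomial

noncomputable section CircleUnits

lemma cc_natDegree : (Polynomial.X ^ 2 - 1 : Polynomial ℝ).natDegree = 2 := by
  have : (Polynomial.X ^ 2 - 1 : Polynomial ℝ) = Polynomial.X ^ 2 - Polynomial.C 1 := by simp
  rw [this, Polynomial.natDegree_X_pow_sub_C]

lemma cc_ne_zero : (Polynomial.X ^ 2 - 1 : Polynomial ℝ) ≠ 0 := by
  intro h
  have := cc_natDegree
  rw [h] at this
  simp at this

lemma deg_arg (a b : Polynomial ℝ) (k : ℝ)
    (h : a ^ 2 + b ^ 2 * (Polynomial.X ^ 2 - 1) = Polynomial.C k) : b = 0 := by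
  by_contra hb
  set da := a.natDegree * 2 with hda
  set db := b.natDegree * 2 + 2 with hdb
  have hBdeg : (b ^ 2 * (Polynomial.X ^ 2 - 1)).natDegree = db := by
    rw [Polynomial.natDegree_mul (pow_ne_zero _ hb) cc_ne_zero, Polynomial.natDegree_pow,
      cc_natDegree]
    ring
  have hBcoeff : (b ^ 2 * (Polynomial.X ^ 2 - 1)).coeff db = b.leadingCoeff ^ 2 := by
    rw [← hBdeg, Polynomial.coeff_natDegree, Polynomial.leadingCoeff_mul,
      Polynomial.leadingCoeff_pow]
    have : (Polynomial.X ^ 2 - 1 : Polynomial ℝ).leadingCoeff = 1 := by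
      have : (Polynomial.X ^ 2 - 1 : Polynomial ℝ) = Polynomial.X ^ 2 - Polynomial.C 1 := by simp
      rw [this]
      exact (Polynomial.monic_X_pow_sub_C (1:ℝ) (by norm_num)).leadingCoeff
    rw [this, mul_one]
  have hAcoeff : (a ^ 2).coeff da = a.leadingCoeff * a.leadingCoeff := by
    rw [sq, hda, mul_comm a.natDegree 2, two_mul]
    exact Polynomial.coeff_mul_degree_add_degree a a
  have hAle : (a ^ 2).natDegree ≤ da := by
    rw [hda, mul_comm]
    exact Polynomial.natDegree_pow_le
  set N := max da db with hN
  have hN0 : N ≠ 0 := by omega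
  have hzero : (a ^ 2).coeff N + (b ^ 2 * (Polynomial.X ^ 2 - 1)).coeff N = 0 := by
    rw [← Polynomial.coeff_add, h, Polynomial.coeff_C, if_neg hN0]
  have hlcb : b.leadingCoeff ≠ 0 := Polynomial.leadingCoeff_ne_zero.mpr hb
  rcases le_or_gt da db with hle | hlt
  · have hNdb : N = db := by omega
    have hA : 0 ≤ (a ^ 2).coeff N := by
      rcases lt_or_eq_of_le (show da ≤ N from le_max_left _ _) with h' | h'
      · rw [Polynomial.coeff_eq_zero_of_natDegree_lt (lt_of_le_of_lt hAle h')]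
      · rw [← h', hAcoeff]; exact mul_self_nonneg _
    rw [hNdb] at hA
    rw [hNdb, hBcoeff] at hzero
    have hp : 0 < b.leadingCoeff ^ 2 := by positivity
    linarith
  · have hNda : N = da := by omega
    have hB0 : (b ^ 2 * (Polynomial.X ^ 2 - 1)).coeff da = 0 :=
      Polynomial.coeff_eq_zero_of_natDegree_lt (by omega)
    rw [hNda, hAcoeff, hB0, add_zero] at hzero
    have ha : a = 0 := by
      by_contra ha
      exact (Polynomial.leadingCoeff_ne_zero.mpr ha) (by nlinarith [hzero])
    rw [ha] at hda
    simp at hda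
    omega

/-- inner relation polynomial -/
def cc : Polynomial ℝ := Polynomial.X ^ 2 - 1
/-- the relation as a polynomial in the outer variable -/
def ff : Polynomial (Polynomial ℝ) := Polynomial.X ^ 2 + Polynomial.C cc

lemma ff_monic : ff.Monic := by
  apply Polynomial.monic_X_pow_add (n := 2)
  exact lt_of_le_of_lt (Polynomial.degree_C_le) (by norm_num)

lemma ff_degree : ff.degree = 2 := by
  unfold ff
  rw [Polynomial.degree_add_eq_left_of_degree_lt] <;>
    simp [Polynomial.degree_X_pow]
  exact lt_of_le_of_lt (Polynomial.degree_C_le) (by norm_num)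

lemma root_sq : AdjoinRoot.root ff ^ 2 = - AdjoinRoot.of ff cc := by
  have h := AdjoinRoot.eval₂_root ff
  unfold ff at h ⊢
  simp [Polynomial.eval₂_add, Polynomial.eval₂_pow] at h
  linear_combination h

lemma ff_aeval_neg_root : Polynomial.aeval (-AdjoinRoot.root ff) ff = 0 := by
  show Polynomial.aeval (-AdjoinRoot.root ff) (Polynomial.X ^ 2 + Polynomial.C cc) = 0
  simp [map_add, map_pow, neg_pow]
  rw [root_sq]; simp

/-- conjugation -/
def sg : AdjoinRoot ff →ₐ[Polynomial ℝ] AdjoinRoot ff :=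
  AdjoinRoot.liftAlgHom ff (Algebra.ofId _ _) (-AdjoinRoot.root ff) ff_aeval_neg_root

lemma sg_root : sg (AdjoinRoot.root ff) = - AdjoinRoot.root ff :=
  AdjoinRoot.liftAlgHom_root ff _ _ ff_aeval_neg_root

lemma sg_of (x : Polynomial ℝ) : sg (AdjoinRoot.of ff x) = AdjoinRoot.of ff x := by
  rw [← AdjoinRoot.algebraMap_eq]; exact sg.commutes x

lemma repr_adjoin (z : AdjoinRoot ff) :
    ∃ a b : Polynomial ℝ, z = AdjoinRoot.of ff a + AdjoinRoot.of ff b * AdjoinRoot.root ff := by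
  induction z using AdjoinRoot.induction_on with
  | ih p =>
    refine ⟨(p %ₘ ff).coeff 0, (p %ₘ ff).coeff 1, ?_⟩
    have hdeg : (p %ₘ ff).degree ≤ 1 := by
      have h := Polynomial.degree_modByMonic_lt p ff_monic
      rw [ff_degree] at h
      exact Order.le_of_lt_succ (by exact_mod_cast h)
    conv_lhs => rw [← Polynomial.modByMonic_add_div p ff]
    conv_lhs => rw [Polynomial.eq_X_add_C_of_degree_le_one hdeg]
    rw [map_add, map_add, map_mul, map_mul, AdjoinRoot.mk_self]
    simp only [zero_mul, add_zero]
    show _ + AdjoinRoot.of ff _ = _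
    rw [AdjoinRoot.mk_X]
    rw [show (AdjoinRoot.mk ff) (Polynomial.C ((p %ₘ ff).coeff 1)) = AdjoinRoot.of ff ((p %ₘ ff).coeff 1) from rfl]
    ring

lemma norm_eq (a b : Polynomial ℝ) :
    (AdjoinRoot.of ff a + AdjoinRoot.of ff b * AdjoinRoot.root ff) *
      sg (AdjoinRoot.of ff a + AdjoinRoot.of ff b * AdjoinRoot.root ff) =
    AdjoinRoot.of ff (a ^ 2 + b ^ 2 * cc) := by
  rw [map_add, map_mul, sg_of, sg_of, sg_root, map_add, map_mul, map_pow, map_pow]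
  ring_nf
  rw [root_sq]
  ring


lemma units_adjoinRoot (w w' : AdjoinRoot ff) (h : w * w' = 1) :
    ∃ r : ℝ, r ≠ 0 ∧ w = algebraMap ℝ (AdjoinRoot ff) r := by
  obtain ⟨a, b, rfl⟩ := repr_adjoin w
  obtain ⟨p, q, rfl⟩ := repr_adjoin w'
  have key : AdjoinRoot.of ff ((a ^ 2 + b ^ 2 * cc) * (p ^ 2 + q ^ 2 * cc)) = 1 := by
    rw [map_mul, ← norm_eq, ← norm_eq]
    calc (AdjoinRoot.of ff a + AdjoinRoot.of ff b * AdjoinRoot.root ff) *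
          sg (AdjoinRoot.of ff a + AdjoinRoot.of ff b * AdjoinRoot.root ff) *
          ((AdjoinRoot.of ff p + AdjoinRoot.of ff q * AdjoinRoot.root ff) *
            sg (AdjoinRoot.of ff p + AdjoinRoot.of ff q * AdjoinRoot.root ff))
        = ((AdjoinRoot.of ff a + AdjoinRoot.of ff b * AdjoinRoot.root ff) *
            (AdjoinRoot.of ff p + AdjoinRoot.of ff q * AdjoinRoot.root ff)) *
          (sg (AdjoinRoot.of ff a + AdjoinRoot.of ff b * AdjoinRoot.root ff) *
            sg (AdjoinRoot.of ff p + AdjoinRoot.of ff q * AdjoinRoot.root ff)) := by ring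
      _ = 1 := by rw [← map_mul sg, h, map_one, mul_one]
  have hinj : Function.Injective (AdjoinRoot.of ff) :=
    AdjoinRoot.of.injective_of_degree_ne_zero (by rw [ff_degree]; norm_num)
  have key2 : (a ^ 2 + b ^ 2 * cc) * (p ^ 2 + q ^ 2 * cc) = 1 := by
    apply hinj
    rw [key, map_one]
  have hUnit : IsUnit (a ^ 2 + b ^ 2 * cc) := IsUnit.of_mul_eq_one _ key2
  obtain ⟨k, hk, hCk⟩ := Polynomial.isUnit_iff.mp hUnit
  have hb0 : b = 0 := deg_arg a b k (by unfold cc at hCk; exact hCk.symm)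
  have ha2 : a * a = Polynomial.C k := by
    have := hCk
    rw [hb0] at this
    simpa [sq] using this.symm
  have haa : IsUnit (a * a) := ha2 ▸ Polynomial.isUnit_C.mpr hk
  have haUnit : IsUnit a := isUnit_of_mul_isUnit_left haa
  obtain ⟨r, hr, hCr⟩ := Polynomial.isUnit_iff.mp haUnit
  refine ⟨r, hr.ne_zero, ?_⟩
  rw [hb0, map_zero, zero_mul, add_zero, ← hCr]
  rw [IsScalarTower.algebraMap_apply ℝ (Polynomial ℝ) (AdjoinRoot ff)]
  simp [AdjoinRoot.algebraMap_eq]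

def E : MvPolynomial (Fin 2) ℝ ≃ₐ[ℝ] Polynomial (Polynomial ℝ) :=
  (MvPolynomial.finSuccEquiv ℝ 1).trans
    (Polynomial.mapAlgEquiv ((MvPolynomial.finSuccEquiv ℝ 0).trans
      (Polynomial.mapAlgEquiv (MvPolynomial.isEmptyAlgEquiv ℝ (Fin 0)))))

lemma E_rel : E ((X 0 : MvPolynomial (Fin 2) ℝ) ^ 2 + X 1 ^ 2 - 1) = ff := by
  have h1 : (X 1 : MvPolynomial (Fin 2) ℝ) = X (Fin.succ 0) := rfl
  show _ = Polynomial.X ^ 2 + Polynomial.C (Polynomial.X ^ 2 - 1)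
  simp [E, h1, MvPolynomial.finSuccEquiv_X_zero, MvPolynomial.finSuccEquiv_X_succ]
  ring

def Eq2 : (MvPolynomial (Fin 2) ℝ ⧸
      Ideal.span {(X 0 : MvPolynomial (Fin 2) ℝ) ^ 2 + X 1 ^ 2 - 1}) ≃ₐ[ℝ] AdjoinRoot ff :=
  Ideal.quotientEquivAlg
    (Ideal.span {(X 0 : MvPolynomial (Fin 2) ℝ) ^ 2 + X 1 ^ 2 - 1})
    (Ideal.span {ff}) E
    (by
      rw [Ideal.map_span, Set.image_singleton]
      have h : (E : MvPolynomial (Fin 2) ℝ →+* Polynomial (Polynomial ℝ))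
          ((X 0 : MvPolynomial (Fin 2) ℝ) ^ 2 + X 1 ^ 2 - 1) = ff := E_rel
      rw [h])

end CircleUnits

/-- Every unit of `ℝ[x,y]/(x² + y² − 1)`, the coordinate ring of the real circle `𝕊¹`,
is the image of a nonzero real constant. -/
theorem units_circle_ring_eq_constants
    (u : (MvPolynomial (Fin 2) ℝ ⧸
        Ideal.span {(X 0 : MvPolynomial (Fin 2) ℝ) ^ 2 + X 1 ^ 2 - 1})ˣ) :
    ∃ c : ℝˣ,
      (u : MvPolynomial (Fin 2) ℝ ⧸
          Ideal.span {(X 0 : MvPolynomial (Fin 2) ℝ) ^ 2 + X 1 ^ 2 - 1}) =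
        algebraMap ℝ
          (MvPolynomial (Fin 2) ℝ ⧸
            Ideal.span {(X 0 : MvPolynomial (Fin 2) ℝ) ^ 2 + X 1 ^ 2 - 1}) (c : ℝ) := by
  obtain ⟨r, hr, hw⟩ := units_adjoinRoot (Eq2 ↑u) (Eq2 ↑u⁻¹)
    (by rw [← map_mul, Units.mul_inv, map_one])
  refine ⟨Units.mk0 r hr, ?_⟩
  calc (u : MvPolynomial (Fin 2) ℝ ⧸ _)
      = Eq2.symm (Eq2 ↑u) := (Eq2.symm_apply_apply _).symm
    _ = Eq2.symm (algebraMap ℝ (AdjoinRoot ff) r) := by rw [hw]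
    _ = _ := Eq2.symm.commutes r
end
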